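/- arXiv:2103.09611 — 4 statements merged into one kernel-verified Lean document; each statement's English description precedes it below -/
import Mathlib

section
/- Borel Lemma: Let φ be a monotone nondecreasing real-valued function on [0,∞) such that φ(r₀) > 1 for some r₀ ≥ 0. Then for every δ > 0 there exists a measurable set E_δ ⊆ [0,∞) of finite Lebesgue measure such that for every r ∈ [0,∞) \ E_δ at which φ is differentiable, one has φ'(r) ≤ φ(r)·(log φ(r))^{1+δ}. -/
open MeasureTheory Set
open scoped ENNReal

/-- **Borel Lemma.** If `φ` is monotone nondecreasing on `[0,∞)` with `φ r₀ > 1` for some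
`r₀ ≥ 0`, then for every `δ > 0` there is a measurable set `E_δ ⊆ [0,∞)` of finite Lebesgue
measure such that `φ'(r) ≤ φ(r) * (log φ(r))^(1+δ)` for every `r ∈ [0,∞) \ E_δ` at which `φ`
is differentiable. -/
theorem borel_lemma (φ : ℝ → ℝ) (hφ : MonotoneOn φ (Ici (0 : ℝ)))
    (r₀ : ℝ) (hr₀ : 0 ≤ r₀) (hφr₀ : 1 < φ r₀) (δ : ℝ) (hδ : 0 < δ) :
    ∃ E : Set ℝ, E ⊆ Ici (0 : ℝ) ∧ MeasurableSet E ∧ volume E < ⊤ ∧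
      ∀ r ∈ Ici (0 : ℝ) \ E, DifferentiableAt ℝ φ r →
        deriv φ r ≤ φ r * Real.log (φ r) ^ (1 + δ) := by
  classical
  set c : ℝ := φ r₀ with hc
  set r₁ : ℝ := r₀ + 1 with hr₁def
  have hr₁0 : (0 : ℝ) < r₁ := by linarith
  have hr₀r₁ : r₀ ≤ r₁ := by linarith
  -- the global monotone extension of φ
  set Φ : ℝ → ℝ := fun r => φ (max r 0) with hΦdef
  have hΦmono : Monotone Φ := fun a b hab =>
    hφ (mem_Ici.2 (le_max_right _ _)) (mem_Ici.2 (le_max_right _ _)) (max_le_max hab le_rfl)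
  have hΦeqφ : ∀ r : ℝ, 0 ≤ r → Φ r = φ r := fun r hr => by
    simp only [hΦdef, max_eq_left hr]
  have hΦge : ∀ r : ℝ, r₀ ≤ r → c ≤ Φ r := fun r hr => by
    rw [hΦeqφ r (le_trans hr₀ hr)]
    exact hφ (mem_Ici.2 hr₀) (mem_Ici.2 (le_trans hr₀ hr)) hr
  have hΦmeas : Measurable Φ := hΦmono.measurable
  -- the auxiliary decreasing-integrand antiderivative g
  set g : ℝ → ℝ := fun t => -(Real.log t ^ (-δ)) / δ with hgdef
  have hg_mono : ∀ s t : ℝ, 1 < s → s ≤ t → g s ≤ g t := by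
    intro s t hs hst
    have hls : 0 < Real.log s := Real.log_pos hs
    have h1 : Real.log t ^ (-δ) ≤ Real.log s ^ (-δ) :=
      Real.rpow_le_rpow_of_nonpos hls (Real.log_le_log (by linarith) hst)
        (by linarith)
    simp only [hgdef]
    have := neg_le_neg h1
    exact div_le_div_of_nonneg_right this hδ.le
  have hg_nonpos : ∀ t : ℝ, 1 < t → g t ≤ 0 := by
    intro t ht
    have : 0 ≤ Real.log t ^ (-δ) := Real.rpow_nonneg (Real.log_nonneg ht.le) _
    have h2 : 0 ≤ Real.log t ^ (-δ) / δ := div_nonneg this hδ.le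
    simp only [hgdef, neg_div]
    linarith
  have hg_deriv : ∀ t : ℝ, 1 < t →
      HasDerivAt g (t⁻¹ * Real.log t ^ (-δ - 1)) t := by
    intro t ht
    have hlt : 0 < Real.log t := Real.log_pos ht
    have hlog : HasDerivAt Real.log t⁻¹ t := Real.hasDerivAt_log (by linarith)
    have h1 : HasDerivAt (fun t => Real.log t ^ (-δ))
        (t⁻¹ * (-δ) * Real.log t ^ (-δ - 1)) t :=
      hlog.rpow_const (Or.inl (ne_of_gt hlt))
    have h2 := (h1.neg).div_const δ
    refine h2.congr_deriv ?_
    rw [div_eq_iff hδ.ne']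
    ring
  -- the bounded monotone function Ψ
  set Ψ : ℝ → ℝ := fun r => g (Φ (max r r₁)) with hΨdef
  have hΦc : ∀ r : ℝ, c ≤ Φ (max r r₁) := fun r =>
    hΦge _ (le_trans hr₀r₁ (le_max_right _ _))
  have hΨmono : Monotone Ψ := by
    intro a b hab
    exact hg_mono _ _ (lt_of_lt_of_le hφr₀ (hΦc a))
      (hΦmono (max_le_max hab le_rfl))
  have hΨ_nonpos : ∀ r : ℝ, Ψ r ≤ 0 := fun r =>
    hg_nonpos _ (lt_of_lt_of_le hφr₀ (hΦc r))
  have hΨ_lb : ∀ r : ℝ, g c ≤ Ψ r := fun r => hg_mono _ _ hφr₀ (hΦc r)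
  set M : ℝ := -(g c) with hMdef
  -- the Stieltjes measure of Ψ has total mass at most M
  set ν : Measure ℝ := hΨmono.stieltjesFunction.measure with hνdef
  have hνIoc : ∀ a b : ℝ, ν (Ioc a b) ≤ ENNReal.ofReal M := by
    intro a b
    rw [hνdef, StieltjesFunction.measure_Ioc]
    apply ENNReal.ofReal_le_ofReal
    have h1 : hΨmono.stieltjesFunction b ≤ Ψ (b + 1) := by
      rw [hΨmono.stieltjesFunction_eq]
      exact hΨmono.rightLim_le (by linarith)
    have h2 : Ψ a ≤ hΨmono.stieltjesFunction a := by
      rw [hΨmono.stieltjesFunction_eq]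
      exact hΨmono.le_rightLim le_rfl
    have := hΨ_nonpos (b + 1)
    have := hΨ_lb a
    simp only [hMdef]
    linarith
  have hνuniv : ν univ ≤ ENNReal.ofReal M := by
    have hU : (univ : Set ℝ) = ⋃ n : ℕ, Ioc (-(n : ℝ)) n := by
      ext x
      simp only [mem_univ, mem_iUnion, mem_Ioc, true_iff]
      obtain ⟨n, hn⟩ := exists_nat_gt |x|
      exact ⟨n, by cases abs_lt.1 hn with | intro h1 h2 => exact lt_of_lt_of_le h1 le_rfl,
        le_of_lt (lt_of_le_of_lt (le_abs_self x) hn)⟩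
    rw [hU, Directed.measure_iUnion]
    · exact iSup_le fun n => hνIoc _ _
    · intro m n
      refine ⟨max m n, Ioc_subset_Ioc ?_ ?_, Ioc_subset_Ioc ?_ ?_⟩ <;>
        simp [neg_le_neg_iff, Nat.cast_le, le_max_left, le_max_right]
  -- the bad set
  have hrpow_cont : Continuous fun x : ℝ => x ^ (1 + δ) :=
    continuous_iff_continuousAt.2 fun x =>
      Real.continuousAt_rpow_const x _ (Or.inr (by linarith))
  set B : Set ℝ :=
    {r | Φ r * Real.log (Φ r) ^ (1 + δ) < deriv Φ r} ∩ Ioi r₁ with hBdef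
  have hBmeas : MeasurableSet B := by
    apply MeasurableSet.inter _ measurableSet_Ioi
    exact measurableSet_lt
      (hΦmeas.mul ((hrpow_cont.measurable).comp (Real.measurable_log.comp hΦmeas)))
      (measurable_deriv Φ)
  -- key pointwise estimate on B
  have hkey : ∀ᵐ x ∂volume, x ∈ B →
      (1 : ℝ≥0∞) ≤ ν.rnDeriv volume x := by
    filter_upwards [hΨmono.ae_hasDerivAt] with x hx hxB
    obtain ⟨hxlt, hxr₁⟩ := hxB
    simp only [mem_setOf_eq] at hxlt
    rw [mem_Ioi] at hxr₁
    have hΦx1 : 1 < Φ x := lt_of_lt_of_le hφr₀ (hΦge x (by linarith))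
    have hΦxpos : (0 : ℝ) < Φ x := by linarith
    have hLpos : 0 < Real.log (Φ x) := Real.log_pos hΦx1
    have hRHSpos : 0 < Φ x * Real.log (Φ x) ^ (1 + δ) :=
      mul_pos hΦxpos (Real.rpow_pos_of_pos hLpos _)
    have hdΦpos : 0 < deriv Φ x := lt_trans hRHSpos hxlt
    have hΦdiff : DifferentiableAt ℝ Φ x := by
      by_contra h
      rw [deriv_zero_of_not_differentiableAt h] at hdΦpos
      exact lt_irrefl _ hdΦpos
    set k : ℝ := (Φ x)⁻¹ * Real.log (Φ x) ^ (-δ - 1) with hkdef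
    have hkpos : 0 < k :=
      mul_pos (inv_pos.2 hΦxpos) (Real.rpow_pos_of_pos hLpos _)
    have hcomp : HasDerivAt (fun y => g (Φ y)) (k * deriv Φ x) x :=
      (hg_deriv (Φ x) hΦx1).comp x hΦdiff.hasDerivAt
    have hΨeq : Ψ =ᶠ[nhds x] fun y => g (Φ y) := by
      filter_upwards [isOpen_Ioi.mem_nhds (mem_Ioi.2 hxr₁)] with y hy
      simp only [hΨdef, max_eq_left (le_of_lt (mem_Ioi.1 hy))]
    have hΨder : HasDerivAt Ψ (k * deriv Φ x) x :=
      hcomp.congr_of_eventuallyEq hΨeq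
    have heq : (ν.rnDeriv volume x).toReal = k * deriv Φ x := hx.unique hΨder
    have hone : (1 : ℝ) < k * deriv Φ x := by
      have h1 : k * (Φ x * Real.log (Φ x) ^ (1 + δ)) = 1 := by
        have hL : Real.log (Φ x) ^ (-δ - 1) * Real.log (Φ x) ^ (1 + δ) = 1 := by
          have h0 : -δ - 1 + (1 + δ) = 0 := by ring
          rw [← Real.rpow_add hLpos, h0, Real.rpow_zero]
        have hΦi : (Φ x)⁻¹ * Φ x = 1 := inv_mul_cancel₀ (ne_of_gt hΦxpos)
        calc k * (Φ x * Real.log (Φ x) ^ (1 + δ))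
            = ((Φ x)⁻¹ * Φ x) * (Real.log (Φ x) ^ (-δ - 1) *
              Real.log (Φ x) ^ (1 + δ)) := by rw [hkdef]; ring
          _ = 1 := by rw [hL, hΦi, mul_one]
      calc (1 : ℝ) = k * (Φ x * Real.log (Φ x) ^ (1 + δ)) := h1.symm
        _ < k * deriv Φ x := by exact mul_lt_mul_of_pos_left hxlt hkpos
    have : (1 : ℝ) ≤ (ν.rnDeriv volume x).toReal := by rw [heq]; linarith
    calc (1 : ℝ≥0∞) = ENNReal.ofReal 1 := ENNReal.ofReal_one.symm
      _ ≤ ν.rnDeriv volume x := ENNReal.ofReal_le_of_le_toReal this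
  -- the bad set has finite measure
  have hBvol : volume B ≤ ENNReal.ofReal M := by
    have h1 : volume B = ∫⁻ x in B, 1 ∂volume := by
      rw [setLIntegral_one]
    have h2 : (∫⁻ x in B, 1 ∂volume) ≤ ∫⁻ x in B, ν.rnDeriv volume x ∂volume := by
      apply lintegral_mono_ae
      exact (ae_restrict_iff' hBmeas).2 hkey
    have h3 : (∫⁻ x in B, ν.rnDeriv volume x ∂volume) = volume.withDensity (ν.rnDeriv volume) B :=
      (withDensity_apply _ hBmeas).symm
    have h4 : volume.withDensity (ν.rnDeriv volume) B ≤ ν B :=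
      Measure.le_iff'.1 (Measure.withDensity_rnDeriv_le ν volume) B
    calc volume B = ∫⁻ x in B, 1 ∂volume := h1
      _ ≤ ∫⁻ x in B, ν.rnDeriv volume x ∂volume := h2
      _ = volume.withDensity (ν.rnDeriv volume) B := h3
      _ ≤ ν B := h4
      _ ≤ ν univ := measure_mono (subset_univ _)
      _ ≤ ENNReal.ofReal M := hνuniv
  -- assemble
  refine ⟨Icc 0 r₁ ∪ B, ?_, ?_, ?_, ?_⟩
  · intro x hx
    cases hx with
    | inl h => exact h.1
    | inr h => exact le_of_lt (lt_trans hr₁0 (mem_Ioi.1 h.2))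
  · exact measurableSet_Icc.union hBmeas
  · calc volume (Icc 0 r₁ ∪ B) ≤ volume (Icc 0 r₁) + volume B := measure_union_le _ _
      _ ≤ ENNReal.ofReal r₁ + ENNReal.ofReal M := by
          rw [Real.volume_Icc]
          exact add_le_add (ENNReal.ofReal_le_ofReal (by linarith)) hBvol
      _ < ⊤ := ENNReal.add_lt_top.2 ⟨ENNReal.ofReal_lt_top, ENNReal.ofReal_lt_top⟩
  · rintro r ⟨hr0, hrE⟩ _
    rw [mem_Ici] at hr0
    have hrr₁ : r₁ < r := by
      by_contra h
      exact hrE (Or.inl ⟨hr0, le_of_not_gt h⟩)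
    have hrB : r ∉ B := fun h => hrE (Or.inr h)
    have hnot : ¬ (Φ r * Real.log (Φ r) ^ (1 + δ) < deriv Φ r) := by
      intro h
      exact hrB ⟨h, mem_Ioi.2 hrr₁⟩
    have hΦφ : Φ =ᶠ[nhds r] φ := by
      filter_upwards [isOpen_Ioi.mem_nhds (mem_Ioi.2 (lt_trans hr₁0 hrr₁))] with y hy
      exact hΦeqφ y (le_of_lt (mem_Ioi.1 hy))
    have hderiv : deriv Φ r = deriv φ r := hΦφ.deriv_eq
    have hval : Φ r = φ r := hΦeqφ r hr0
    rw [hderiv, hval] at hnot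
    linarith [le_of_not_gt hnot]
end

section
/- Quantitative Borel Lemma: Let φ be a monotone nondecreasing real-valued function on [0,∞) with φ(r₀) > 1 for some r₀ ≥ 0, and let δ > 0. Then the set S = { r ∈ [r₀,∞) : φ is differentiable at r and φ'(r) > φ(r)·(log φ(r))^{1+δ} } has Lebesgue measure at most 1/(δ·(log φ(r₀))^δ); in particular its Lebesgue measure is finite. -/
open MeasureTheory Set

/-- **Quantitative Borel Lemma.** If `φ` is monotone nondecreasing on `[0,∞)` with
`φ r₀ > 1` for some `r₀ ≥ 0` and `δ > 0`, then the set
`S = {r ∈ [r₀,∞) : φ differentiable at r and φ'(r) > φ(r) (log φ(r))^(1+δ)}`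
has Lebesgue measure at most `1/(δ (log φ(r₀))^δ)`; in particular it is finite. -/
theorem quantitative_borel_lemma (φ : ℝ → ℝ) (hφ : MonotoneOn φ (Ici (0 : ℝ)))
    (r₀ : ℝ) (hr₀ : 0 ≤ r₀) (hφr₀ : 1 < φ r₀) (δ : ℝ) (hδ : 0 < δ) :
    volume {r : ℝ | r ∈ Ici r₀ ∧ DifferentiableAt ℝ φ r ∧
        φ r * Real.log (φ r) ^ (1 + δ) < deriv φ r}
        ≤ ENNReal.ofReal (1 / (δ * Real.log (φ r₀) ^ δ)) ∧
      volume {r : ℝ | r ∈ Ici r₀ ∧ DifferentiableAt ℝ φ r ∧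
        φ r * Real.log (φ r) ^ (1 + δ) < deriv φ r} < ⊤ := by
  set S : Set ℝ := {r : ℝ | r ∈ Ici r₀ ∧ DifferentiableAt ℝ φ r ∧
      φ r * Real.log (φ r) ^ (1 + δ) < deriv φ r} with hS
  set L₀ : ℝ := Real.log (φ r₀) with hL₀def
  have hL₀ : 0 < L₀ := Real.log_pos hφr₀
  set c : ℝ := 1 / (δ * L₀ ^ δ) with hcdef
  -- facts about φ at max r r₀
  have hmem : ∀ r : ℝ, max r r₀ ∈ Ici (0:ℝ) := fun r => le_trans hr₀ (le_max_right r r₀)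
  have hb1 : ∀ r : ℝ, 1 < φ (max r r₀) :=
    fun r => lt_of_lt_of_le hφr₀ (hφ (mem_Ici.2 hr₀) (hmem r) (le_max_right r r₀))
  have hlogpos : ∀ r : ℝ, 0 < Real.log (φ (max r r₀)) := fun r => Real.log_pos (hb1 r)
  have hlogge : ∀ r : ℝ, L₀ ≤ Real.log (φ (max r r₀)) :=
    fun r => Real.log_le_log (lt_trans one_pos hφr₀)
      (hφ (mem_Ici.2 hr₀) (hmem r) (le_max_right r r₀))
  -- the auxiliary monotone function ψ
  set ψ : ℝ → ℝ := fun r => -(1/δ) * Real.log (φ (max r r₀)) ^ (-δ) with hψdef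
  have hψmono : Monotone ψ := by
    intro a b hab
    have h1 : φ (max a r₀) ≤ φ (max b r₀) :=
      hφ (hmem a) (hmem b) (max_le_max hab le_rfl)
    have h2 : Real.log (φ (max a r₀)) ≤ Real.log (φ (max b r₀)) :=
      Real.log_le_log (lt_trans one_pos (hb1 a)) h1
    have h3 : Real.log (φ (max b r₀)) ^ (-δ) ≤ Real.log (φ (max a r₀)) ^ (-δ) :=
      Real.rpow_le_rpow_of_nonpos (hlogpos a) h2 (by linarith)
    have h4 : 0 < (1:ℝ)/δ := by positivity
    simp only [hψdef]
    nlinarith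
  -- bounds for ψ
  have hψub : ∀ r, ψ r ≤ 0 := by
    intro r
    have : 0 < Real.log (φ (max r r₀)) ^ (-δ) := Real.rpow_pos_of_pos (hlogpos r) _
    have h4 : 0 < (1:ℝ)/δ := by positivity
    simp only [hψdef]
    nlinarith [mul_pos h4 this]
  have hψlb : ∀ r, -c ≤ ψ r := by
    intro r
    have h3 : Real.log (φ (max r r₀)) ^ (-δ) ≤ L₀ ^ (-δ) :=
      Real.rpow_le_rpow_of_nonpos hL₀ (hlogge r) (by linarith)
    have hc : c = (1/δ) * L₀ ^ (-δ) := by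
      rw [hcdef, Real.rpow_neg hL₀.le]
      field_simp
    have h4 : 0 < (1:ℝ)/δ := by positivity
    rw [hc]
    simp only [hψdef]
    nlinarith
  -- Stieltjes measure machinery
  set g := hψmono.stieltjesFunction with hgdef
  set μ := g.measure with hμdef
  have hae := hψmono.ae_hasDerivAt
  set A : Set ℝ := {x | 1 ≤ μ.rnDeriv volume x} with hAdef
  have hAmeas : MeasurableSet A :=
    measurableSet_le measurable_const (Measure.measurable_rnDeriv μ volume)
  -- key a.e. inclusion
  have hkey : ∀ᵐ x, x ∈ S ∩ Ioi r₀ → x ∈ A := by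
    filter_upwards [hae] with x hd hx
    obtain ⟨⟨hxr, hdiff, hlt⟩, hxgt⟩ := hx
    have hxmax : max x r₀ = x := max_eq_left hxr
    set t : ℝ := φ x with htdef
    have ht1 : 1 < t := by
      have := hb1 x; rwa [hxmax] at this
    have ht0 : (0:ℝ) < t := lt_trans one_pos ht1
    set s : ℝ := Real.log t with hsdef
    have hs0 : 0 < s := Real.log_pos ht1
    -- derivative of ψ at x via chain rule
    have H1 : HasDerivAt Real.log t⁻¹ t := Real.hasDerivAt_log (ne_of_gt ht0)
    have H2 : HasDerivAt (fun u : ℝ => u ^ (-δ)) ((-δ) * s ^ (-δ - 1)) s :=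
      Real.hasDerivAt_rpow_const (Or.inl (ne_of_gt hs0))
    have H3 : HasDerivAt (fun u : ℝ => -(1/δ) * u ^ (-δ))
        (-(1/δ) * ((-δ) * s ^ (-δ - 1))) s := H2.const_mul _
    have H4 : HasDerivAt (fun y : ℝ => -(1/δ) * Real.log y ^ (-δ))
        (-(1/δ) * ((-δ) * s ^ (-δ - 1)) * t⁻¹) t := by
        have := HasDerivAt.comp t H3 H1; exact this
    have H5 : HasDerivAt (fun y : ℝ => -(1/δ) * Real.log (φ y) ^ (-δ))
        (-(1/δ) * ((-δ) * s ^ (-δ - 1)) * t⁻¹ * deriv φ x) x :=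
      H4.comp x hdiff.hasDerivAt
    have hev : ψ =ᶠ[nhds x] (fun y : ℝ => -(1/δ) * Real.log (φ y) ^ (-δ)) := by
      filter_upwards [isOpen_Ioi.mem_nhds hxgt] with y hy
      simp only [hψdef, max_eq_left (le_of_lt (mem_Ioi.1 hy))]
    have Hψ : HasDerivAt ψ (-(1/δ) * ((-δ) * s ^ (-δ - 1)) * t⁻¹ * deriv φ x) x :=
      H5.congr_of_eventuallyEq hev
    have hdval : (μ.rnDeriv volume x).toReal
        = -(1/δ) * ((-δ) * s ^ (-δ - 1)) * t⁻¹ * deriv φ x := hd.unique Hψ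
    -- the derivative exceeds 1
    have hk : -(1/δ) * ((-δ) * s ^ (-δ - 1)) * t⁻¹ = s ^ (-δ - 1) * t⁻¹ := by
      field_simp
    have hkpos : 0 < s ^ (-δ - 1) * t⁻¹ := by positivity
    have hone : s ^ (-δ - 1) * t⁻¹ * (t * s ^ (1 + δ)) = 1 := by
      have : s ^ (-δ - 1) * s ^ (1 + δ) = 1 := by
        rw [← Real.rpow_add hs0]
        have h0 : -δ - 1 + (1 + δ) = 0 := by ring
        rw [h0, Real.rpow_zero]
      field_simp at this ⊢
      nlinarith [this]
    have hgt1 : 1 < (μ.rnDeriv volume x).toReal := by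
      rw [hdval, hk]
      calc (1:ℝ) = s ^ (-δ - 1) * t⁻¹ * (t * s ^ (1 + δ)) := hone.symm
        _ < s ^ (-δ - 1) * t⁻¹ * deriv φ x := by
            exact mul_lt_mul_of_pos_left hlt hkpos
    -- conclude 1 ≤ rnDeriv
    by_cases htop : μ.rnDeriv volume x = ⊤
    · simp [hAdef, htop]
    · have := ENNReal.ofReal_le_ofReal (le_of_lt hgt1)
      rw [ENNReal.ofReal_one, ENNReal.ofReal_toReal htop] at this
      exact this
  -- measure chain
  have h0 : volume S ≤ volume (S ∩ Ioi r₀) := by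
    calc volume S ≤ volume ({r₀} ∪ S ∩ Ioi r₀) := by
          apply measure_mono
          intro r hr
          rcases eq_or_lt_of_le (mem_Ici.1 hr.1) with h | h
          · exact Or.inl (by simp [← h])
          · exact Or.inr ⟨hr, h⟩
      _ ≤ volume {r₀} + volume (S ∩ Ioi r₀) := measure_union_le _ _
      _ = volume (S ∩ Ioi r₀) := by simp
  have h1 : volume (S ∩ Ioi r₀) ≤ volume A := measure_mono_ae hkey
  have h2 : volume A ≤ μ Set.univ := by
    calc volume A = ∫⁻ _ in A, 1 ∂volume := (setLIntegral_one A).symm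
      _ ≤ ∫⁻ x in A, μ.rnDeriv volume x ∂volume :=
          setLIntegral_mono (Measure.measurable_rnDeriv μ volume) (fun x hx => hx)
      _ ≤ ∫⁻ x, μ.rnDeriv volume x ∂volume := setLIntegral_le_lintegral _ _
      _ ≤ μ Set.univ := Measure.lintegral_rnDeriv_le
  -- bound μ univ
  have hgub : ∀ x, g x ≤ 0 := by
    intro x
    rw [hgdef, hψmono.stieltjesFunction_eq]
    exact le_trans (hψmono.rightLim_le (lt_add_one x)) (hψub (x+1))
  have hglb : ∀ x, -c ≤ g x := by
    intro x
    rw [hgdef, hψmono.stieltjesFunction_eq]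
    exact le_trans (hψlb x) (hψmono.le_rightLim le_rfl)
  have htop : Filter.Tendsto g Filter.atTop (nhds (⨆ x, g x)) :=
    tendsto_atTop_ciSup g.mono ⟨0, fun y hy => by obtain ⟨x, rfl⟩ := hy; exact hgub x⟩
  have hbot : Filter.Tendsto g Filter.atBot (nhds (⨅ x, g x)) :=
    tendsto_atBot_ciInf g.mono ⟨-c, fun y hy => by obtain ⟨x, rfl⟩ := hy; exact hglb x⟩
  have h3 : μ Set.univ = ENNReal.ofReal ((⨆ x, g x) - ⨅ x, g x) :=
    g.measure_univ hbot htop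
  have h4 : μ Set.univ ≤ ENNReal.ofReal c := by
    rw [h3]
    apply ENNReal.ofReal_le_ofReal
    have hsup : (⨆ x, g x) ≤ 0 := ciSup_le hgub
    have hinf : -c ≤ (⨅ x, g x) :=
      le_ciInf hglb
    linarith
  have hfinal : volume S ≤ ENNReal.ofReal c :=
    le_trans h0 (le_trans h1 (le_trans h2 h4))
  exact ⟨hfinal, lt_of_le_of_lt hfinal ENNReal.ofReal_lt_top⟩
end

section
/- Let r₀ ≥ 0, let φ : [r₀,∞) → ℝ be monotone nondecreasing with φ(r₀) > 1, and let δ > 0. Then the Lebesgue integral ∫_{r₀}^∞ φ'(r)/(φ(r)·(log φ(r))^{1+δ}) dr (where φ' is the almost-everywhere defined derivative of φ) is finite, and in fact is bounded above by 1/(δ·(log φ(r₀))^δ). -/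
open MeasureTheory Set

/-- If `φ : [r₀,∞) → ℝ` is monotone nondecreasing with `φ r₀ > 1` and `δ > 0`, then the
Lebesgue integral `∫_{r₀}^∞ φ'(r) / (φ(r) (log φ(r))^(1+δ)) dr` (with `φ'` the a.e.-defined
derivative of `φ`) is finite, and in fact bounded above by `1/(δ (log φ(r₀))^δ)`. -/
theorem integral_deriv_div_finite (r₀ : ℝ) (hr₀ : 0 ≤ r₀) (φ : ℝ → ℝ)
    (hφ : MonotoneOn φ (Ici r₀)) (hφr₀ : 1 < φ r₀) (δ : ℝ) (hδ : 0 < δ) :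
    (∫⁻ r in Ici r₀,
        ENNReal.ofReal (deriv φ r / (φ r * Real.log (φ r) ^ (1 + δ)))) ≠ ⊤ ∧
      (∫⁻ r in Ici r₀,
        ENNReal.ofReal (deriv φ r / (φ r * Real.log (φ r) ^ (1 + δ))))
        ≤ ENNReal.ofReal (1 / (δ * Real.log (φ r₀) ^ δ)) := by
  -- the extension of φ to all of ℝ
  set ψ : ℝ → ℝ := fun r => φ (max r r₀) with hψdef
  have hψ : Monotone ψ := by
    intro a b hab
    exact hφ (Set.mem_Ici.2 (le_max_right _ _)) (Set.mem_Ici.2 (le_max_right _ _)) (max_le_max hab le_rfl)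
  have hψ_gt : ∀ r, 1 < ψ r := fun r =>
    lt_of_lt_of_le hφr₀ (hφ (le_refl r₀ : r₀ ∈ Ici r₀) (Set.mem_Ici.2 (le_max_right _ _)) (le_max_right _ _))
  -- the antiderivative of the integrand, composed with φ
  set G : ℝ → ℝ := fun x => -(δ⁻¹ * Real.log x ^ (-δ)) with hGdef
  have hGmono : ∀ ⦃x y : ℝ⦄, 1 < x → x ≤ y → G x ≤ G y := by
    intro x y hx hxy
    have hlx : 0 < Real.log x := Real.log_pos hx
    have hly : 0 < Real.log y := Real.log_pos (hx.trans_le hxy)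
    have h1 : Real.log x ^ (-δ) = (Real.log x ^ δ)⁻¹ := by
      rw [Real.rpow_neg hlx.le]
    have h2 : Real.log y ^ (-δ) = (Real.log y ^ δ)⁻¹ := by
      rw [Real.rpow_neg hly.le]
    have hpx : 0 < Real.log x ^ δ := Real.rpow_pos_of_pos hlx δ
    have hle : Real.log x ^ δ ≤ Real.log y ^ δ :=
      Real.rpow_le_rpow hlx.le (Real.log_le_log (lt_trans one_pos hx) hxy) hδ.le
    simp only [hGdef, h1, h2, neg_le_neg_iff]
    have := inv_anti₀ hpx hle
    exact mul_le_mul_of_nonneg_left this (inv_nonneg.2 hδ.le)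
  have hGderiv : ∀ x : ℝ, 1 < x →
      HasDerivAt G (1 / (x * Real.log x ^ (1 + δ))) x := by
    intro x hx
    have hxpos : 0 < x := lt_trans one_pos hx
    have hlx : 0 < Real.log x := Real.log_pos hx
    have h1 : HasDerivAt Real.log x⁻¹ x := Real.hasDerivAt_log hxpos.ne'
    have h2 : HasDerivAt (fun y : ℝ => y ^ (-δ)) (-δ * Real.log x ^ (-δ - 1)) (Real.log x) :=
      Real.hasDerivAt_rpow_const (Or.inl hlx.ne')
    have h3 : HasDerivAt (fun y : ℝ => Real.log y ^ (-δ)) (-δ * Real.log x ^ (-δ - 1) * x⁻¹) x :=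
      h2.comp x h1
    have h4 := (h3.const_mul δ⁻¹).neg
    convert h4 using 1
    case e'_4 => rfl
    case e'_5 => rfl
    case e'_8 => rfl
    have hexp : -δ - 1 = -(1 + δ) := by ring
    rw [hexp, Real.rpow_neg hlx.le]
    have hpow : 0 < Real.log x ^ (1 + δ) := Real.rpow_pos_of_pos hlx _
    field_simp
  set F : ℝ → ℝ := fun r => G (ψ r) with hFdef
  have hF : Monotone F := fun a b hab => hGmono (hψ_gt a) (hψ hab)
  have hFneg : ∀ r, F r ≤ 0 := by
    intro r
    have hl : 0 < Real.log (ψ r) := Real.log_pos (hψ_gt r)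
    have : 0 < δ⁻¹ * Real.log (ψ r) ^ (-δ) :=
      mul_pos (inv_pos.2 hδ) (Real.rpow_pos_of_pos hl _)
    simp only [hFdef, hGdef]
    linarith
  -- value of F on (-∞, r₀]
  have hc0 : 0 < δ * Real.log (φ r₀) ^ δ :=
    mul_pos hδ (Real.rpow_pos_of_pos (Real.log_pos hφr₀) δ)
  have hFr₀ : ∀ r ≤ r₀, F r = -(1 / (δ * Real.log (φ r₀) ^ δ)) := by
    intro r hr
    have : ψ r = φ r₀ := by simp [hψdef, max_eq_right hr]
    simp only [hFdef, hGdef, this, Real.rpow_neg (Real.log_pos hφr₀).le]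
    rw [one_div, mul_inv]
  -- the Stieltjes measure associated to F
  set ν : Measure ℝ := hF.stieltjesFunction.measure with hνdef
  -- bound on the measure of [r₀, ∞)
  have hν_bound : ν (Ici r₀) ≤ ENNReal.ofReal (1 / (δ * Real.log (φ r₀) ^ δ)) := by
    have hg := hF.stieltjesFunction
    have hico : ∀ b : ℝ, ν (Ico r₀ b) ≤ ENNReal.ofReal (1 / (δ * Real.log (φ r₀) ^ δ)) := by
      intro b
      rw [hνdef, StieltjesFunction.measure_Ico]
      apply ENNReal.ofReal_le_ofReal
      have h1 : Function.leftLim (hF.stieltjesFunction) b ≤ hF.stieltjesFunction b :=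
        (hF.stieltjesFunction).mono.leftLim_le le_rfl
      have h2 : hF.stieltjesFunction b ≤ 0 := by
        rw [hF.stieltjesFunction_eq]
        exact (hF.rightLim_le (lt_add_one b)).trans (hFneg (b + 1))
      have h3 : F (r₀ - 1) ≤ Function.leftLim (hF.stieltjesFunction) r₀ := by
        have ha : F (r₀ - 1) ≤ hF.stieltjesFunction (r₀ - 1) := by
          rw [hF.stieltjesFunction_eq]
          exact hF.le_rightLim le_rfl
        exact ha.trans ((hF.stieltjesFunction).mono.le_leftLim (sub_one_lt r₀))
      have h4 : F (r₀ - 1) = -(1 / (δ * Real.log (φ r₀) ^ δ)) :=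
        hFr₀ _ (by linarith)
      rw [h4] at h3
      linarith
    exact le_of_tendsto (tendsto_measure_Ico_atTop ν r₀) (Filter.Eventually.of_forall hico)
  -- the pointwise a.e. inequality on Ici r₀
  have hae : ∀ᵐ r ∂(volume.restrict (Ici r₀)),
      ENNReal.ofReal (deriv φ r / (φ r * Real.log (φ r) ^ (1 + δ)))
        ≤ Measure.rnDeriv ν volume r := by
    have hne : ∀ᵐ r : ℝ, r ≠ r₀ := by
      rw [MeasureTheory.ae_iff]
      have : {r : ℝ | ¬ r ≠ r₀} = {r₀} := by ext x; simp
      rw [this]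
      exact measure_singleton r₀
    filter_upwards [ae_restrict_of_ae hF.ae_hasDerivAt, ae_restrict_of_ae hψ.ae_hasDerivAt,
      ae_restrict_of_ae hne, ae_restrict_mem measurableSet_Ici] with r hFr hψr hner hrmem
    have hrgt : r₀ < r := lt_of_le_of_ne hrmem (Ne.symm hner)
    -- φ and ψ agree near r
    have heq : φ =ᶠ[nhds r] ψ := by
      filter_upwards [Ioi_mem_nhds hrgt] with y hy
      simp [hψdef, max_eq_left (le_of_lt (Set.mem_Ioi.1 hy))]
    have hψr_eq : ψ r = φ r := by simp [hψdef, max_eq_left (Set.mem_Ici.1 hrmem)]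
    have hφr_gt : 1 < φ r := hψr_eq ▸ hψ_gt r
    have hφderiv : HasDerivAt φ ((Measure.rnDeriv hψ.stieltjesFunction.measure volume r).toReal)
        r := hψr.congr_of_eventuallyEq heq
    have hderiv_eq : deriv φ r =
        (Measure.rnDeriv hψ.stieltjesFunction.measure volume r).toReal := hφderiv.deriv
    have hG' : HasDerivAt G (1 / (φ r * Real.log (φ r) ^ (1 + δ))) (ψ r) := by
      rw [hψr_eq]; exact hGderiv _ hφr_gt
    have hcomp : HasDerivAt F
        ((1 / (φ r * Real.log (φ r) ^ (1 + δ))) *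
          (Measure.rnDeriv hψ.stieltjesFunction.measure volume r).toReal) r :=
      hG'.comp r hψr
    have huniq : (Measure.rnDeriv ν volume r).toReal =
        (1 / (φ r * Real.log (φ r) ^ (1 + δ))) *
          (Measure.rnDeriv hψ.stieltjesFunction.measure volume r).toReal :=
      hFr.unique hcomp
    have : deriv φ r / (φ r * Real.log (φ r) ^ (1 + δ)) =
        (Measure.rnDeriv ν volume r).toReal := by
      rw [huniq, hderiv_eq]; ring
    rw [this]
    exact ENNReal.ofReal_toReal_le
  have hmain : (∫⁻ r in Ici r₀,
      ENNReal.ofReal (deriv φ r / (φ r * Real.log (φ r) ^ (1 + δ))))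
        ≤ ENNReal.ofReal (1 / (δ * Real.log (φ r₀) ^ δ)) :=
    calc (∫⁻ r in Ici r₀,
        ENNReal.ofReal (deriv φ r / (φ r * Real.log (φ r) ^ (1 + δ))))
        ≤ ∫⁻ r in Ici r₀, Measure.rnDeriv ν volume r := lintegral_mono_ae hae
      _ ≤ ν (Ici r₀) := Measure.setLIntegral_rnDeriv_le _
      _ ≤ ENNReal.ofReal (1 / (δ * Real.log (φ r₀) ^ δ)) := hν_bound
  exact ⟨ne_top_of_le_ne_top ENNReal.ofReal_ne_top hmain, hmain⟩
end

section
/- Let m ≥ 1 and let T : [1,∞) → ℝ be a nondecreasing differentiable function with T(r₀) > 1 for some r₀ ≥ 1. Suppose the function S(r) := r^{2m-1}·T'(r) is nondecreasing and differentiable on [1,∞) with S(r₁) > 1 for some r₁ ≥ 1. Then there exist a constant C > 0 and a measurable set E ⊆ [1,∞) of finite Lebesgue measure such that for all r ∈ [1,∞) \ E, log⁺( r^{-(2m-1)}·S'(r) ) ≤ C·( log⁺ T(r) + log⁺ log r + 1 ). -/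
open MeasureTheory Set

private lemma plog_nonneg (x : ℝ) : 0 ≤ max 0 (Real.log x) := le_max_left _ _

private lemma plog_mono {x y : ℝ} (hx : 0 ≤ x) (h : x ≤ y) :
    max 0 (Real.log x) ≤ max 0 (Real.log y) := by
  rcases eq_or_lt_of_le hx with h0 | h0
  · simp [← h0, Real.log_zero]
  · exact max_le_max le_rfl (Real.log_le_log h0 h)

private lemma plog_mul {x y : ℝ} (hx : 0 ≤ x) (hy : 0 ≤ y) :
    max 0 (Real.log (x * y)) ≤ max 0 (Real.log x) + max 0 (Real.log y) := by
  rcases eq_or_lt_of_le hx with h0 | h0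
  · have := add_nonneg (plog_nonneg x) (plog_nonneg y)
    simp only [← h0, Real.log_zero, zero_mul, max_self]
    simpa using this
  rcases eq_or_lt_of_le hy with h0' | h0'
  · have := add_nonneg (plog_nonneg x) (plog_nonneg y)
    simp only [← h0', Real.log_zero, mul_zero, max_self]
    simpa using this
  rw [Real.log_mul h0.ne' h0'.ne']
  exact max_le (add_nonneg (plog_nonneg x) (plog_nonneg y))
    (add_le_add (le_max_right _ _) (le_max_right _ _))

private lemma plog_sq (x : ℝ) : max 0 (Real.log (x ^ 2)) = 2 * max 0 (Real.log x) := by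
  rw [Real.log_pow]
  push_cast
  rw [mul_max_of_nonneg _ _ (by norm_num : (0:ℝ) ≤ 2), mul_zero]

/-- If a monotone function `g` is bounded above by `M`, then the set of points `> a` where
`g` is differentiable with derivative at least `1` has finite measure. -/
private lemma borel_meas_lemma {g : ℝ → ℝ} {a M : ℝ} (hmono : Monotone g)
    (hM : ∀ x, g x ≤ M) {A : Set ℝ}
    (hd : ∀ r ∈ A, DifferentiableAt ℝ g r ∧ 1 ≤ deriv g r)
    (hA : MeasurableSet A) (hAsub : A ⊆ Ioi a) :
    volume A < ⊤ := by
  have hgm : Measurable g := hmono.measurable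
  set φ : ℕ → ℝ → ℝ := fun n x => ((n : ℝ) + 1) * (g (x + ((n : ℝ) + 1)⁻¹) - g x) with hφdef
  have hφmeas : ∀ n, Measurable (φ n) := fun n =>
    measurable_const.mul ((hgm.comp (measurable_id.add_const _)).sub hgm)
  have hφnn : ∀ n x, 0 ≤ φ n x := by
    intro n x
    apply mul_nonneg (by positivity)
    have : x ≤ x + ((n : ℝ) + 1)⁻¹ := le_add_of_nonneg_right (by positivity)
    linarith [hmono this]
  -- pointwise Fatou comparison
  have hpt : ∀ x : ℝ, ENNReal.ofReal (deriv g x)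
      ≤ Filter.liminf (fun n => ENNReal.ofReal (φ n x)) Filter.atTop := by
    intro x
    by_cases hx : DifferentiableAt ℝ g x
    · have hslope := hasDerivAt_iff_tendsto_slope.1 hx.hasDerivAt
      have hseq : Filter.Tendsto (fun n : ℕ => x + ((n : ℝ) + 1)⁻¹)
          Filter.atTop (nhdsWithin x {x}ᶜ) := by
        apply tendsto_nhdsWithin_of_tendsto_nhds_of_eventually_within
        · have h1 : Filter.Tendsto (fun n : ℕ => ((n : ℝ) + 1)) Filter.atTop Filter.atTop :=
            Filter.tendsto_atTop_add_const_right _ _ tendsto_natCast_atTop_atTop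
          have h2 := h1.inv_tendsto_atTop
          have := Filter.Tendsto.const_add x h2
          simpa using this
        · apply Filter.Eventually.of_forall
          intro n
          have : (0:ℝ) < ((n : ℝ) + 1)⁻¹ := by positivity
          simp only [mem_compl_iff, mem_singleton_iff]
          intro h
          nlinarith [congrArg (fun t => t - x) h]
      have htend := hslope.comp hseq
      have heq : ∀ n : ℕ, slope g x (x + ((n : ℝ) + 1)⁻¹) = φ n x := by
        intro n
        rw [slope_def_field]
        have hne : ((n : ℝ) + 1)⁻¹ ≠ 0 := by positivity
        simp only [hφdef]
        rw [show x + ((n : ℝ) + 1)⁻¹ - x = ((n : ℝ) + 1)⁻¹ by ring, div_inv_eq_mul]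
        ring
      have htend2 : Filter.Tendsto (fun n : ℕ => φ n x) Filter.atTop (nhds (deriv g x)) := by
        refine htend.congr fun n => ?_
        exact heq n
      have htend3 : Filter.Tendsto (fun n : ℕ => ENNReal.ofReal (φ n x)) Filter.atTop
          (nhds (ENNReal.ofReal (deriv g x))) :=
        (ENNReal.continuous_ofReal.tendsto _).comp htend2
      rw [htend3.liminf_eq]
    · simp [deriv_zero_of_not_differentiableAt hx]
  have hMa : g a ≤ M := hM a
  -- the key uniform bound
  have key : ∀ b : ℝ, volume (A ∩ Ioo a b) ≤ ENNReal.ofReal (M - g a) := by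
    intro b
    rcases le_or_gt b a with hba | hab
    · rw [Ioo_eq_empty (by intro h; exact absurd (h.trans_le hba) (lt_irrefl a))]
      simp
    · have hgint : ∀ p q : ℝ, IntervalIntegrable g volume p q := fun p q =>
        hmono.intervalIntegrable
      calc volume (A ∩ Ioo a b) = ∫⁻ _ in A ∩ Ioo a b, 1 ∂volume := (setLIntegral_one _).symm
        _ ≤ ∫⁻ x in A ∩ Ioo a b, ENNReal.ofReal (deriv g x) ∂volume := by
            apply setLIntegral_mono (ENNReal.measurable_ofReal.comp (measurable_deriv g))
            intro x hx
            rw [show (1 : ENNReal) = ENNReal.ofReal 1 by simp]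
            exact ENNReal.ofReal_le_ofReal (hd x hx.1).2
        _ ≤ ∫⁻ x in Ioo a b, ENNReal.ofReal (deriv g x) ∂volume :=
            lintegral_mono_set inter_subset_right
        _ ≤ ∫⁻ x in Ioo a b,
              Filter.liminf (fun n => ENNReal.ofReal (φ n x)) Filter.atTop ∂volume :=
            lintegral_mono fun x => hpt x
        _ ≤ Filter.liminf
              (fun n => ∫⁻ x in Ioo a b, ENNReal.ofReal (φ n x) ∂volume) Filter.atTop :=
            lintegral_liminf_le fun n => ENNReal.measurable_ofReal.comp (hφmeas n)
        _ ≤ ENNReal.ofReal (M - g a) := by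
            have hper : ∀ n : ℕ, (∫⁻ x in Ioo a b, ENNReal.ofReal (φ n x) ∂volume)
                ≤ ENNReal.ofReal (M - g a) := by
              intro n
              set c : ℝ := ((n : ℝ) + 1)⁻¹ with hc
              have hcpos : 0 < c := by positivity
              have hgs : ∀ p q : ℝ, IntervalIntegrable (fun x => g (x + c)) volume p q :=
                fun p q => (hmono.comp (fun x y hxy => by simpa using add_le_add_right hxy c :
                  Monotone (fun x : ℝ => x + c))).intervalIntegrable
              have hintOn : IntegrableOn g (Ioo a b) volume :=
                ((hgint a b).1.mono_set Ioo_subset_Ioc_self)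
              have hintOn' : IntegrableOn (fun x => g (x + c)) (Ioo a b) volume :=
                ((hgs a b).1.mono_set Ioo_subset_Ioc_self)
              have hintφ : IntegrableOn (φ n) (Ioo a b) volume := by
                exact (hintOn'.sub hintOn).const_mul _
              rw [← ofReal_integral_eq_lintegral_ofReal hintφ
                  (Filter.Eventually.of_forall (fun x => hφnn n x))]
              apply ENNReal.ofReal_le_ofReal
              -- compute the integral
              have hIoo : ∫ x in Ioo a b, φ n x ∂volume = ∫ x in a..b, φ n x := by
                rw [intervalIntegral.integral_of_le hab.le, integral_Ioc_eq_integral_Ioo]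
              rw [hIoo]
              have hsplit : ∫ x in a..b, φ n x
                  = ((n : ℝ) + 1) * ((∫ x in a..b, g (x + c)) - ∫ x in a..b, g x) := by
                rw [← intervalIntegral.integral_sub (hgs a b) (hgint a b),
                  ← intervalIntegral.integral_const_mul]
              have hshift : (∫ x in a..b, g (x + c)) = ∫ x in (a+c)..(b+c), g x :=
                intervalIntegral.integral_comp_add_right g c
              have hA1 : (∫ x in a..(b+c), g x)
                  = (∫ x in a..b, g x) + ∫ x in b..(b+c), g x :=
                (intervalIntegral.integral_add_adjacent_intervals (hgint a b)
                  (hgint b (b+c))).symm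
              have hA2 : (∫ x in a..(b+c), g x)
                  = (∫ x in a..(a+c), g x) + ∫ x in (a+c)..(b+c), g x :=
                (intervalIntegral.integral_add_adjacent_intervals (hgint a (a+c))
                  (hgint (a+c) (b+c))).symm
              have hub : (∫ x in b..(b+c), g x) ≤ c * M := by
                have := intervalIntegral.integral_mono_on (by linarith : b ≤ b + c)
                  (hgint b (b+c)) (intervalIntegrable_const (c := M))
                  (fun x _ => hM x)
                simpa [intervalIntegral.integral_const, smul_eq_mul] using this
              have hlb : c * g a ≤ ∫ x in a..(a+c), g x := by
                have := intervalIntegral.integral_mono_on (by linarith : a ≤ a + c)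
                  (intervalIntegrable_const (c := g a)) (hgint a (a+c))
                  (fun x hx => hmono hx.1)
                simpa [intervalIntegral.integral_const, smul_eq_mul] using this
              have hcancel : ((n : ℝ) + 1) * c = 1 := by
                rw [hc]; field_simp
              rw [hsplit, hshift]
              have hdiff : (∫ x in (a+c)..(b+c), g x) - (∫ x in a..b, g x)
                  = (∫ x in b..(b+c), g x) - ∫ x in a..(a+c), g x := by linarith
              rw [hdiff]
              have h1 : (∫ x in b..(b+c), g x) - (∫ x in a..(a+c), g x) ≤ c * (M - g a) := by
                have : c * (M - g a) = c * M - c * g a := by ring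
                linarith
              calc ((n : ℝ) + 1) * ((∫ x in b..(b+c), g x) - ∫ x in a..(a+c), g x)
                  ≤ ((n : ℝ) + 1) * (c * (M - g a)) :=
                    mul_le_mul_of_nonneg_left h1 (by positivity)
                _ = M - g a := by rw [← mul_assoc, hcancel, one_mul]
            calc Filter.liminf
                  (fun n => ∫⁻ x in Ioo a b, ENNReal.ofReal (φ n x) ∂volume) Filter.atTop
                ≤ Filter.liminf (fun _ : ℕ => ENNReal.ofReal (M - g a)) Filter.atTop :=
                  Filter.liminf_le_liminf (Filter.Eventually.of_forall hper)
              _ = ENNReal.ofReal (M - g a) := Filter.liminf_const _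
  -- conclude by exhausting A
  have hAeq : A = ⋃ n : ℕ, A ∩ Ioo a (a + ((n : ℝ) + 1)) := by
    ext x
    constructor
    · intro hx
      obtain ⟨n, hn⟩ := exists_nat_gt (x - a)
      exact mem_iUnion.2 ⟨n, hx, hAsub hx, by push_cast; linarith⟩
    · rintro hx
      obtain ⟨n, hn, _⟩ := mem_iUnion.1 hx
      exact hn
  have hdir : Directed (· ⊆ ·) (fun n : ℕ => A ∩ Ioo a (a + ((n : ℝ) + 1))) := by
    apply Monotone.directed_le
    intro p q hpq
    apply inter_subset_inter_right
    apply Ioo_subset_Ioo le_rfl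
    have : (p : ℝ) ≤ q := by exact_mod_cast hpq
    linarith
  rw [hAeq, hdir.measure_iUnion]
  exact lt_of_le_of_lt (iSup_le fun n => key _) ENNReal.ofReal_lt_top

private lemma deriv_nonneg_of_monotoneOn {f : ℝ → ℝ} {r : ℝ} (hr : 1 < r)
    (hf : MonotoneOn f (Ici 1)) (hdiff : DifferentiableAt ℝ f r) : 0 ≤ deriv f r := by
  have h := hasDerivAt_iff_tendsto_slope.1 hdiff.hasDerivAt
  refine ge_of_tendsto h ?_
  have hmem : Ioi (1:ℝ) ∈ nhdsWithin r {r}ᶜ :=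
    nhdsWithin_le_nhds (isOpen_Ioi.mem_nhds hr)
  filter_upwards [hmem, self_mem_nhdsWithin] with y hy hyne
  have hy1 : (1:ℝ) ≤ y := le_of_lt hy
  rw [slope_def_field]
  rcases lt_or_gt_of_ne (hyne : y ≠ r) with hlt | hgt
  · apply div_nonneg_of_nonpos
    · have := hf hy1 hr.le hlt.le
      linarith
    · linarith
  · apply div_nonneg
    · have := hf hr.le hy1 hgt.le
      linarith
    · linarith

set_option maxHeartbeats 1000000 in
/-- Let `m ≥ 1` and `T : [1,∞) → ℝ` be nondecreasing and differentiable with `T r₀ > 1` for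
some `r₀ ≥ 1`.  If `S(r) := r^{2m-1} T'(r)` is nondecreasing and differentiable on `[1,∞)`
with `S r₁ > 1` for some `r₁ ≥ 1`, then there are `C > 0` and a measurable `E ⊆ [1,∞)` of
finite Lebesgue measure such that `log⁺(r^{-(2m-1)} S'(r)) ≤ C (log⁺ T(r) + log⁺ log r + 1)`
for all `r ∈ [1,∞) \ E`. -/
theorem calculus_lemma_abstract (m : ℕ) (hm : 1 ≤ m) (T : ℝ → ℝ)
    (hTmono : MonotoneOn T (Ici (1 : ℝ)))
    (hTdiff : ∀ r ∈ Ici (1 : ℝ), DifferentiableAt ℝ T r)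
    (r₀ : ℝ) (hr₀ : 1 ≤ r₀) (hT₀ : 1 < T r₀)
    (hSmono : MonotoneOn (fun r : ℝ => r ^ (2 * m - 1) * deriv T r) (Ici (1 : ℝ)))
    (hSdiff : ∀ r ∈ Ici (1 : ℝ),
      DifferentiableAt ℝ (fun r : ℝ => r ^ (2 * m - 1) * deriv T r) r)
    (r₁ : ℝ) (hr₁ : 1 ≤ r₁) (hS₁ : 1 < r₁ ^ (2 * m - 1) * deriv T r₁) :
    ∃ C > (0 : ℝ), ∃ E : Set ℝ, E ⊆ Ici (1 : ℝ) ∧ MeasurableSet E ∧ volume E < ⊤ ∧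
      ∀ r ∈ Ici (1 : ℝ) \ E,
        max 0 (Real.log
            ((r ^ (2 * m - 1))⁻¹ * deriv (fun r : ℝ => r ^ (2 * m - 1) * deriv T r) r))
          ≤ C * (max 0 (Real.log (T r)) + max 0 (Real.log (Real.log r)) + 1) := by
  classical
  set S : ℝ → ℝ := fun r : ℝ => r ^ (2 * m - 1) * deriv T r with hSdef
  set a : ℝ := max (max r₀ r₁) (Real.exp 1) with hadef
  have hea : Real.exp 1 ≤ a := le_max_right _ _
  have h1e : (1 : ℝ) < Real.exp 1 := by
    have := Real.exp_one_gt_d9; linarith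
  have ha1 : (1 : ℝ) < a := lt_of_lt_of_le h1e hea
  have har₀ : r₀ ≤ a := le_trans (le_max_left _ _) (le_max_left _ _)
  have har₁ : r₁ ≤ a := le_trans (le_max_right _ _) (le_max_left _ _)
  have hmemI : ∀ x : ℝ, a ≤ x → x ∈ Ici (1 : ℝ) := fun x hx => le_trans ha1.le hx
  have hTge : ∀ x, a ≤ x → 1 < T x := fun x hx =>
    lt_of_lt_of_le hT₀ (hTmono hr₀ (hmemI x hx) (har₀.trans hx))
  have hSge : ∀ x, a ≤ x → 1 < S x := fun x hx =>
    lt_of_lt_of_le hS₁ (hSmono hr₁ (hmemI x hx) (har₁.trans hx))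
  have hmaxmem : ∀ x : ℝ, max x a ∈ Ici (1 : ℝ) := fun x =>
    le_trans ha1.le (le_max_right _ _)
  set Tm : ℝ → ℝ := fun x => T (max x a) with hTmdef
  set Sm : ℝ → ℝ := fun x => S (max x a) with hSmdef
  have hTmmono : Monotone Tm := fun x y hxy =>
    hTmono (hmaxmem x) (hmaxmem y) (max_le_max hxy le_rfl)
  have hSmmono : Monotone Sm := fun x y hxy =>
    hSmono (hmaxmem x) (hmaxmem y) (max_le_max hxy le_rfl)
  have hTmge : ∀ x, 1 < Tm x := fun x => hTge _ (le_max_right x a)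
  have hSmge : ∀ x, 1 < Sm x := fun x => hSge _ (le_max_right x a)
  have hTmeq : ∀ x, a < x → Tm x = T x := fun x hx => by
    rw [hTmdef]; simp [max_eq_left hx.le]
  have hSmeq : ∀ x, a < x → Sm x = S x := fun x hx => by
    rw [hSmdef]; simp [max_eq_left hx.le]
  -- the three exceptional sets
  set E₁ : Set ℝ := Ioi a ∩ {r | Sm r * (Real.log (Sm r)) ^ 2 < deriv S r} with hE₁def
  set E₂ : Set ℝ := Ioi a ∩ {r | (Tm r) ^ 2 < deriv T r} with hE₂def
  set E₃ : Set ℝ := Ioi a ∩ {r | Real.exp (Tm r) ≤ deriv T r} with hE₃def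
  have hmE₁ : MeasurableSet E₁ :=
    measurableSet_Ioi.inter (measurableSet_lt
      (hSmmono.measurable.mul ((Real.measurable_log.comp hSmmono.measurable).pow_const 2))
      (measurable_deriv S))
  have hmE₂ : MeasurableSet E₂ :=
    measurableSet_Ioi.inter (measurableSet_lt (hTmmono.measurable.pow_const 2)
      (measurable_deriv T))
  have hmE₃ : MeasurableSet E₃ :=
    measurableSet_Ioi.inter (measurableSet_le (Real.measurable_exp.comp hTmmono.measurable)
      (measurable_deriv T))
  -- measure bounds via borel_meas_lemma
  have hv₁ : volume E₁ < ⊤ := by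
    apply borel_meas_lemma (g := fun x => -(Real.log (Sm x))⁻¹) (a := a) (M := 0)
    · intro x y hxy
      have h1 : 0 < Real.log (Sm x) := Real.log_pos (hSmge x)
      have h2 : Real.log (Sm x) ≤ Real.log (Sm y) :=
        Real.log_le_log (by linarith [hSmge x]) (hSmmono hxy)
      have h3 : (Real.log (Sm y))⁻¹ ≤ (Real.log (Sm x))⁻¹ := by
        apply inv_anti₀ h1 h2
      simpa using neg_le_neg h3
    · intro x
      have h1 : 0 < Real.log (Sm x) := Real.log_pos (hSmge x)
      simp only [neg_nonpos]
      positivity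
    · intro r hr
      obtain ⟨hra, hlt⟩ := hr
      have hra' : a < r := hra
      have hrI : r ∈ Ici (1 : ℝ) := hmemI r hra'.le
      have hSr : 1 < S r := hSge r hra'.le
      have hSr0 : S r ≠ 0 := by linarith
      have hlSr : 0 < Real.log (S r) := Real.log_pos hSr
      have hs : HasDerivAt S (deriv S r) r := (hSdiff r hrI).hasDerivAt
      have hlog : HasDerivAt (fun x => Real.log (S x)) (deriv S r / S r) r := hs.log hSr0
      have hinv : HasDerivAt (fun x => (Real.log (S x))⁻¹)
          (-(deriv S r / S r) / (Real.log (S r)) ^ 2) r := hlog.inv hlSr.ne'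
      have hneg := hinv.neg
      have hev : (fun x => -(Real.log (Sm x))⁻¹) =ᶠ[nhds r]
          (fun x => -(Real.log (S x))⁻¹) := by
        filter_upwards [isOpen_Ioi.mem_nhds hra'] with x hx
        rw [hSmeq x hx]
      have hg := hneg.congr_of_eventuallyEq hev
      refine ⟨hg.differentiableAt, ?_⟩
      rw [hg.deriv]
      have hden : 0 < S r * (Real.log (S r)) ^ 2 := by positivity
      have hlt' : S r * (Real.log (S r)) ^ 2 < deriv S r := by
        rw [← hSmeq r hra']
        exact hlt
      rw [neg_div, neg_neg, div_div]
      exact (one_le_div hden).2 hlt'.le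
    · exact hmE₁
    · exact inter_subset_left
  have hv₂ : volume E₂ < ⊤ := by
    apply borel_meas_lemma (g := fun x => -(Tm x)⁻¹) (a := a) (M := 0)
    · intro x y hxy
      have h1 : 0 < Tm x := by linarith [hTmge x]
      have h3 : (Tm y)⁻¹ ≤ (Tm x)⁻¹ := inv_anti₀ h1 (hTmmono hxy)
      simpa using neg_le_neg h3
    · intro x
      have h1 : 0 < Tm x := by linarith [hTmge x]
      simp only [neg_nonpos]
      positivity
    · intro r hr
      obtain ⟨hra, hlt⟩ := hr
      have hra' : a < r := hra
      have hrI : r ∈ Ici (1 : ℝ) := hmemI r hra'.le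
      have hTr : 1 < T r := hTge r hra'.le
      have hT0 : T r ≠ 0 := by linarith
      have ht : HasDerivAt T (deriv T r) r := (hTdiff r hrI).hasDerivAt
      have hinv : HasDerivAt (fun x => (T x)⁻¹) (-(deriv T r) / (T r) ^ 2) r := ht.inv hT0
      have hneg := hinv.neg
      have hev : (fun x => -(Tm x)⁻¹) =ᶠ[nhds r] (fun x => -(T x)⁻¹) := by
        filter_upwards [isOpen_Ioi.mem_nhds hra'] with x hx
        rw [hTmeq x hx]
      have hg := hneg.congr_of_eventuallyEq hev
      refine ⟨hg.differentiableAt, ?_⟩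
      rw [hg.deriv]
      have hden : 0 < (T r) ^ 2 := by positivity
      have hlt' : (T r) ^ 2 < deriv T r := by
        rw [← hTmeq r hra']
        exact hlt
      rw [neg_div, neg_neg]
      exact (one_le_div hden).2 hlt'.le
    · exact hmE₂
    · exact inter_subset_left
  have hv₃ : volume E₃ < ⊤ := by
    apply borel_meas_lemma (g := fun x => -Real.exp (-(Tm x))) (a := a) (M := 0)
    · intro x y hxy
      have := hTmmono hxy
      have := Real.exp_le_exp.2 (neg_le_neg this)
      simpa using neg_le_neg this
    · intro x
      simp only [neg_nonpos]
      positivity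
    · intro r hr
      obtain ⟨hra, hle⟩ := hr
      have hra' : a < r := hra
      have hrI : r ∈ Ici (1 : ℝ) := hmemI r hra'.le
      have ht : HasDerivAt T (deriv T r) r := (hTdiff r hrI).hasDerivAt
      have hexp : HasDerivAt (fun x => Real.exp (-(T x)))
          (Real.exp (-(T r)) * -(deriv T r)) r := ht.neg.exp
      have hneg := hexp.neg
      have hev : (fun x => -Real.exp (-(Tm x))) =ᶠ[nhds r]
          (fun x => -Real.exp (-(T x))) := by
        filter_upwards [isOpen_Ioi.mem_nhds hra'] with x hx
        rw [hTmeq x hx]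
      have hg := hneg.congr_of_eventuallyEq hev
      refine ⟨hg.differentiableAt, ?_⟩
      rw [hg.deriv]
      have hle' : Real.exp (T r) ≤ deriv T r := by
        rw [← hTmeq r hra']
        exact hle
      have h1 : Real.exp (-(T r)) * Real.exp (T r) ≤ Real.exp (-(T r)) * deriv T r :=
        mul_le_mul_of_nonneg_left hle' (Real.exp_nonneg _)
      rw [← Real.exp_add] at h1
      simp only [neg_add_cancel, Real.exp_zero] at h1
      calc (1 : ℝ) ≤ Real.exp (-(T r)) * deriv T r := h1
        _ = -(Real.exp (-(T r)) * -(deriv T r)) := by ring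
    · exact hmE₃
    · exact inter_subset_left
  -- the exceptional set
  refine ⟨4 * (m : ℝ) + 4, by positivity, Icc 1 a ∪ (E₁ ∪ E₂ ∪ E₃), ?_, ?_, ?_, ?_⟩
  · intro x hx
    rcases hx with hx | hx
    · exact hx.1
    · have : x ∈ Ioi a := by
        rcases hx with (hx | hx) | hx
        exacts [hx.1, hx.1, hx.1]
      exact le_trans ha1.le (le_of_lt this)
  · exact measurableSet_Icc.union ((hmE₁.union hmE₂).union hmE₃)
  · apply lt_of_le_of_lt (measure_union_le _ _)
    apply ENNReal.add_lt_top.2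
    constructor
    · exact measure_Icc_lt_top
    · apply lt_of_le_of_lt (measure_union_le _ _)
      apply ENNReal.add_lt_top.2
      exact ⟨lt_of_le_of_lt (measure_union_le _ _) (ENNReal.add_lt_top.2 ⟨hv₁, hv₂⟩), hv₃⟩
  -- the pointwise estimate
  intro r hr
  obtain ⟨hr1, hrE⟩ := hr
  have hra : a < r := by
    by_contra h
    push_neg at h
    exact hrE (Or.inl ⟨hr1, h⟩)
  have hrI : r ∈ Ici (1 : ℝ) := hr1
  have hTr : 1 < T r := hTge r hra.le
  have hSr : 1 < S r := hSge r hra.le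
  have hr0 : (0 : ℝ) < r := lt_trans one_pos (lt_of_lt_of_le ha1 hra.le)
  have hlogr : 1 ≤ Real.log r := by
    rw [← Real.log_exp 1]
    exact Real.log_le_log (Real.exp_pos 1) (hea.trans hra.le)
  have h1' : deriv S r ≤ S r * (Real.log (S r)) ^ 2 := by
    by_contra h
    push_neg at h
    refine hrE (Or.inr (Or.inl (Or.inl ⟨hra, ?_⟩)))
    show Sm r * (Real.log (Sm r)) ^ 2 < deriv S r
    rw [hSmeq r hra]
    exact h
  have h2' : deriv T r ≤ (T r) ^ 2 := by
    by_contra h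
    push_neg at h
    refine hrE (Or.inr (Or.inl (Or.inr ⟨hra, ?_⟩)))
    show (Tm r) ^ 2 < deriv T r
    rw [hTmeq r hra]
    exact h
  have h3' : deriv T r < Real.exp (T r) := by
    by_contra h
    push_neg at h
    refine hrE (Or.inr (Or.inr ⟨hra, ?_⟩))
    show Real.exp (Tm r) ≤ deriv T r
    rw [hTmeq r hra]
    exact h
  have hd0 : 0 ≤ deriv S r :=
    deriv_nonneg_of_monotoneOn (lt_of_lt_of_le ha1 hra.le) hSmono (hSdiff r hrI)
  have hrk : (0 : ℝ) < r ^ (2 * m - 1) := pow_pos hr0 _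
  have hSreq : S r = r ^ (2 * m - 1) * deriv T r := rfl
  -- S r ≤ r ^ (T r + 2m)
  have hk : ((2 * m - 1 : ℕ) : ℝ) = 2 * (m : ℝ) - 1 := by
    have h2m : (1 : ℕ) ≤ 2 * m := by omega
    push_cast [Nat.cast_sub h2m]
    ring
  have hrpow : r ^ (2 * m - 1) = r ^ ((2 * (m : ℝ) - 1) : ℝ) := by
    rw [← hk, Real.rpow_natCast]
  have hSle : S r ≤ r ^ (T r + 2 * (m : ℝ)) := by
    by_contra hcon
    push_neg at hcon
    have h2 : r ^ (T r + 2 * (m : ℝ)) / r ^ (2 * m - 1) = r ^ (T r + 1) := by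
      rw [hrpow, ← Real.rpow_sub hr0]
      congr 1
      ring
    have h3 : Real.exp (T r) ≤ r ^ (T r + 1) := by
      rw [Real.rpow_def_of_pos hr0]
      apply Real.exp_le_exp.2
      nlinarith
    have hTd : deriv T r = S r / r ^ (2 * m - 1) := by
      rw [hSreq]
      field_simp
    have h4 : r ^ (T r + 1) < deriv T r := by
      rw [← h2, hTd]
      exact div_lt_div_of_pos_right hcon hrk
    linarith
  have hlogS : Real.log (S r) ≤ (T r + 2 * (m : ℝ)) * Real.log r := by
    calc Real.log (S r) ≤ Real.log (r ^ (T r + 2 * (m : ℝ))) :=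
          Real.log_le_log (by linarith) hSle
      _ = (T r + 2 * (m : ℝ)) * Real.log r := Real.log_rpow hr0 _
  -- main chain
  have hx1 : (r ^ (2 * m - 1))⁻¹ * deriv S r ≤ (T r) ^ 2 * (Real.log (S r)) ^ 2 := by
    have e1 : (r ^ (2 * m - 1))⁻¹ * deriv S r
        ≤ (r ^ (2 * m - 1))⁻¹ * (S r * (Real.log (S r)) ^ 2) :=
      mul_le_mul_of_nonneg_left h1' (inv_nonneg.2 hrk.le)
    have e2 : (r ^ (2 * m - 1))⁻¹ * (S r * (Real.log (S r)) ^ 2)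
        = deriv T r * (Real.log (S r)) ^ 2 := by
      rw [hSreq]
      field_simp
    have e3 : deriv T r * (Real.log (S r)) ^ 2 ≤ (T r) ^ 2 * (Real.log (S r)) ^ 2 :=
      mul_le_mul_of_nonneg_right h2' (sq_nonneg _)
    linarith
  have p1 : max 0 (Real.log ((r ^ (2 * m - 1))⁻¹ * deriv S r))
      ≤ max 0 (Real.log ((T r) ^ 2 * (Real.log (S r)) ^ 2)) :=
    plog_mono (mul_nonneg (inv_nonneg.2 hrk.le) hd0) hx1
  have p2 : max 0 (Real.log ((T r) ^ 2 * (Real.log (S r)) ^ 2))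
      ≤ 2 * max 0 (Real.log (T r)) + 2 * max 0 (Real.log (Real.log (S r))) := by
    have := plog_mul (sq_nonneg (T r)) (sq_nonneg (Real.log (S r)))
    rw [plog_sq, plog_sq] at this
    exact this
  have p3 : max 0 (Real.log (Real.log (S r)))
      ≤ max 0 (Real.log ((T r + 2 * (m : ℝ)) * Real.log r)) :=
    plog_mono (Real.log_nonneg hSr.le) hlogS
  have p4 : max 0 (Real.log ((T r + 2 * (m : ℝ)) * Real.log r))
      ≤ max 0 (Real.log (T r + 2 * (m : ℝ))) + max 0 (Real.log (Real.log r)) :=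
    plog_mul (by positivity) (by linarith)
  have p5 : max 0 (Real.log (T r + 2 * (m : ℝ)))
      ≤ (2 * (m : ℝ) + 1) + max 0 (Real.log (T r)) := by
    have hle : T r + 2 * (m : ℝ) ≤ (2 * (m : ℝ) + 1) * T r := by nlinarith
    calc max 0 (Real.log (T r + 2 * (m : ℝ)))
        ≤ max 0 (Real.log ((2 * (m : ℝ) + 1) * T r)) :=
          plog_mono (by positivity) hle
      _ ≤ max 0 (Real.log (2 * (m : ℝ) + 1)) + max 0 (Real.log (T r)) :=
          plog_mul (by positivity) (by linarith)
      _ ≤ (2 * (m : ℝ) + 1) + max 0 (Real.log (T r)) := by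
          have h0 : Real.log (2 * (m : ℝ) + 1) ≤ 2 * (m : ℝ) + 1 := by
            have := Real.log_le_sub_one_of_pos (show (0:ℝ) < 2 * (m : ℝ) + 1 by positivity)
            linarith
          have : max 0 (Real.log (2 * (m : ℝ) + 1)) ≤ 2 * (m : ℝ) + 1 :=
            max_le (by positivity) h0
          linarith
  have hPT : 0 ≤ max 0 (Real.log (T r)) := plog_nonneg _
  have hPL : 0 ≤ max 0 (Real.log (Real.log r)) := plog_nonneg _
  have hm1 : 0 ≤ 4 * (m : ℝ) * max 0 (Real.log (T r)) := by positivity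
  have hm2 : 0 ≤ (4 * (m : ℝ) + 2) * max 0 (Real.log (Real.log r)) := by positivity
  linarith
end
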